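/- Fix integers n ≥ 1 and l ≥ 1, and for k ∈ ℤ let i_k be the unique element of {0,1,…,n} with i_k ≡ −k (mod n+1). For 1 ≤ k ≤ n define t_k(b) = φ_{i_k}(ẽ^max_{i_{k−1}}⋯ẽ^max_{i_1} b) (for k = 1 this is φ_{i_1}(b)). Then for every b = (x_1,…,x_{n+1}) ∈ B_l one has (t_1(b), t_2(b), …, t_n(b)) = (x_n, x_{n−1}, …, x_1). -/

import Mathlib

/-- Iterated application of a partial map: `OptIter g m a` is `g^m a`. -/
def OptIter {α : Type} (g : α → Option α) : ℕ → α → Option α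
  | 0, a => some a
  | m + 1, a => (g a).bind (OptIter g m)

/-- Apply the partial maps `g 1`, `g 2`, ..., `g m` in this order. -/
def ChainOpt {α : Type} (g : ℕ → α → Option α) (m : ℕ) (a : α) : Option α :=
  (List.range m).foldl (fun acc j => acc.bind (g (j + 1))) (some a)

/-- A set with partial Kashiwara-type operators indexed by `{0, 1, ..., n}`. -/
structure PreCrystal (n : ℕ) where
  carrier : Type
  e : Fin (n + 1) → carrier → Option carrier
  f : Fin (n + 1) → carrier → Option carrier

namespace PreCrystal

variable {n : ℕ}

/-- `ε_i(b) = max {m ≥ 0 : ẽ_i^m b is defined}`. -/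
noncomputable def eps (C : PreCrystal n) (i : Fin (n + 1)) (b : C.carrier) : ℕ :=
  sSup {m | OptIter (C.e i) m b ≠ none}

/-- `φ_i(b) = max {m ≥ 0 : f̃_i^m b is defined}`. -/
noncomputable def phi (C : PreCrystal n) (i : Fin (n + 1)) (b : C.carrier) : ℕ :=
  sSup {m | OptIter (C.f i) m b ≠ none}

/-- `ẽ_i^max b = ẽ_i^{ε_i(b)} b`. -/
noncomputable def eMax (C : PreCrystal n) (i : Fin (n + 1)) (b : C.carrier) : Option C.carrier :=
  OptIter (C.e i) (C.eps i b) b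

/-- The Weyl group operator `S_i`: `f̃_i^{φ_i(b)-ε_i(b)} b` if `φ_i(b) ≥ ε_i(b)`,
and `ẽ_i^{ε_i(b)-φ_i(b)} b` if `φ_i(b) ≤ ε_i(b)`. -/
noncomputable def S (C : PreCrystal n) (i : Fin (n + 1)) (b : C.carrier) : Option C.carrier :=
  if C.eps i b ≤ C.phi i b then OptIter (C.f i) (C.phi i b - C.eps i b) b
  else OptIter (C.e i) (C.eps i b - C.phi i b) b

/-- The tensor product `C ⊗ D` of two crystals, with the Kashiwara tensor product rule. -/
noncomputable def tensor (C D : PreCrystal n) : PreCrystal n where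
  carrier := C.carrier × D.carrier
  e := fun i p =>
    if D.eps i p.2 ≤ C.phi i p.1 then (C.e i p.1).map (fun b => (b, p.2))
    else (D.e i p.2).map (fun b => (p.1, b))
  f := fun i p =>
    if D.eps i p.2 < C.phi i p.1 then (C.f i p.1).map (fun b => (b, p.2))
    else (D.f i p.2).map (fun b => (p.1, b))

end PreCrystal

/-- Kashiwara raising operator `ẽ_i` of type `A_n^{(1)}` on `(n+1)`-tuples of
nonnegative integers (zero-indexed: coordinate `j` is `x_{j+1}`): defined iff the
coordinate at index `i` is positive, it adds 1 at index `i-1` (cyclically) and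
subtracts 1 at index `i`. -/
def eA (n : ℕ) (i : Fin (n + 1)) (x : Fin (n + 1) → ℕ) : Option (Fin (n + 1) → ℕ) :=
  if 0 < x i then
    some (Function.update (Function.update x (i - 1) (x (i - 1) + 1)) i (x i - 1))
  else none

/-- Kashiwara lowering operator `f̃_i` of type `A_n^{(1)}`: defined iff the coordinate
at index `i-1` is positive, it subtracts 1 at index `i-1` and adds 1 at index `i`. -/
def fA (n : ℕ) (i : Fin (n + 1)) (x : Fin (n + 1) → ℕ) : Option (Fin (n + 1) → ℕ) :=
  if 0 < x (i - 1) then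
    some (Function.update (Function.update x i (x i + 1)) (i - 1) (x (i - 1) - 1))
  else none

/-- The crystal operators of type `A_n^{(1)}` on all `(n+1)`-tuples; the crystal `B_l`
is the subset of tuples with coordinate sum `l`. -/
def BA (n : ℕ) : PreCrystal n where
  carrier := Fin (n + 1) → ℕ
  e := eA n
  f := fA n

/-- The unique element of `{0, ..., n}` congruent to `-k` modulo `n+1`. -/
def negIdx (n : ℕ) (k : ℤ) : Fin (n + 1) :=
  ⟨((-k) % ((n : ℤ) + 1)).toNat, by
    have h1 := Int.emod_nonneg (-k) (by omega : ((n : ℤ) + 1) ≠ 0)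
    have h2 := Int.emod_lt_of_pos (-k) (by omega : (0 : ℤ) < (n : ℤ) + 1)
    omega⟩

/-- The cyclic shift `σ : (x_1, ..., x_{n+1}) ↦ (x_2, ..., x_{n+1}, x_1)`. -/
def shiftA (n : ℕ) (x : Fin (n + 1) → ℕ) : Fin (n + 1) → ℕ := fun j => x (j + 1)

/-- The map `t(x_1, ..., x_{n+1}) = (x_n, x_{n-1}, ..., x_1)`. -/
def tA (n : ℕ) (x : Fin (n + 1) → ℕ) : Fin n → ℕ :=
  fun k => x ⟨n - 1 - (k : ℕ), by omega⟩

/-- The `(N+1)`-fold tensor power `B ⊗ ... ⊗ B`, associated to the left. -/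
noncomputable def BPow (n : ℕ) : ℕ → PreCrystal n
  | 0 => BA n
  | N + 1 => (BPow n N).tensor (BA n)

/-- The element `b_1 ⊗ ... ⊗ b_{N+1}` of the `(N+1)`-fold tensor power. -/
noncomputable def tensorOf (n : ℕ) : (N : ℕ) → (Fin (N + 1) → (Fin (n + 1) → ℕ)) → (BPow n N).carrier
  | 0, b => b 0
  | N + 1, b => (tensorOf n N (fun j => b j.castSucc), b (Fin.last (N + 1)))

/-- Membership in `B_{l_1} ⊗ ... ⊗ B_{l_{N+1}}`: each factor has coordinate sum `l_j`. -/
def memBPow (n : ℕ) : (N : ℕ) → (Fin (N + 1) → ℕ) → (BPow n N).carrier → Prop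
  | 0, l, x => ∑ j, x j = l 0
  | N + 1, l, p => memBPow n N (fun j => l j.castSucc) p.1 ∧ ∑ j, p.2 j = l (Fin.last (N + 1))

/-- The componentwise cyclic shift `σ_B = σ ⊗ ... ⊗ σ` on a tensor power. -/
noncomputable def shiftPow (n : ℕ) : (N : ℕ) → (BPow n N).carrier → (BPow n N).carrier
  | 0, x => shiftA n x
  | N + 1, p => (shiftPow n N p.1, shiftA n p.2)


section Aux

lemma sub1_val (n : ℕ) (i : Fin (n+1)) (hn : 1 ≤ n) :
    (i - 1).val = if i.val = 0 then n else i.val - 1 := by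
  rw [Fin.sub_def]
  simp only [Fin.val_mk, Fin.val_one', Nat.mod_eq_of_lt (show 1 < n+1 by omega)]
  rcases Nat.eq_zero_or_pos i.val with h | h
  · rw [h]; simp [Nat.mod_eq_of_lt (show n < n + 1 by omega), h]
  · have h2 : n + 1 - 1 + i.val = (i.val - 1) + (n+1) := by omega
    rw [h2, Nat.add_mod_right, Nat.mod_eq_of_lt (by omega), if_neg (by omega)]

lemma sub1_ne (n : ℕ) (i : Fin (n+1)) (hn : 1 ≤ n) : i - 1 ≠ i := by
  intro h
  have hv := congrArg Fin.val h
  rw [sub1_val n i hn] at hv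
  have hlt := i.isLt
  split_ifs at hv <;> omega

lemma optIter_eA (n : ℕ) (hn : 1 ≤ n) (i : Fin (n+1)) (m : ℕ) (x : Fin (n+1) → ℕ) :
    OptIter (eA n i) m x =
      if m ≤ x i then
        some (Function.update (Function.update x (i-1) (x (i-1) + m)) i (x i - m))
      else none := by
  have hne := sub1_ne n i hn
  induction m generalizing x with
  | zero =>
    simp only [OptIter, Nat.zero_le, if_true, Nat.add_zero, Nat.sub_zero]
    congr 1
    funext j
    simp only [Function.update_apply]
    split_ifs with h1 h2 <;> simp_all
  | succ m ih =>
    rcases Nat.eq_zero_or_pos (x i) with h | h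
    · simp [OptIter, eA, h]
    · simp only [OptIter, eA, if_pos h, Option.bind_some]
      rw [ih]
      set y := Function.update (Function.update x (i - 1) (x (i - 1) + 1)) i (x i - 1) with hy
      have hyi : y i = x i - 1 := by simp [hy, Function.update_apply]
      have hyi1 : y (i-1) = x (i-1) + 1 := by simp [hy, Function.update_apply, hne]
      rw [hyi, hyi1]
      by_cases hm : m + 1 ≤ x i
      · rw [if_pos (by omega), if_pos hm]
        congr 1
        funext j
        simp only [hy, Function.update_apply]
        split_ifs <;> simp_all <;> omega
      · rw [if_neg (by omega), if_neg hm]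

lemma optIter_fA (n : ℕ) (hn : 1 ≤ n) (i : Fin (n+1)) (m : ℕ) (x : Fin (n+1) → ℕ) :
    OptIter (fA n i) m x =
      if m ≤ x (i-1) then
        some (Function.update (Function.update x i (x i + m)) (i-1) (x (i-1) - m))
      else none := by
  have hne := sub1_ne n i hn
  induction m generalizing x with
  | zero =>
    simp only [OptIter, Nat.zero_le, if_true, Nat.add_zero, Nat.sub_zero]
    congr 1
    funext j
    simp only [Function.update_apply]
    split_ifs with h1 h2 <;> simp_all
  | succ m ih =>
    rcases Nat.eq_zero_or_pos (x (i-1)) with h | h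
    · simp [OptIter, fA, h]
    · simp only [OptIter, fA, if_pos h, Option.bind_some]
      rw [ih]
      set y := Function.update (Function.update x i (x i + 1)) (i-1) (x (i-1) - 1) with hy
      have hyi : y (i-1) = x (i-1) - 1 := by simp [hy, Function.update_apply]
      have hyi1 : y i = x i + 1 := by simp [hy, Function.update_apply, hne.symm]
      rw [hyi, hyi1]
      by_cases hm : m + 1 ≤ x (i-1)
      · rw [if_pos (by omega), if_pos hm]
        congr 1
        funext j
        simp only [hy, Function.update_apply]
        split_ifs <;> simp_all <;> omega
      · rw [if_neg (by omega), if_neg hm]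

lemma phi_BA (n : ℕ) (hn : 1 ≤ n) (i : Fin (n+1)) (x : Fin (n+1) → ℕ) :
    (BA n).phi i x = x (i - 1) := by
  have hset : {m | OptIter ((BA n).f i) m x ≠ none} = Set.Iic (x (i-1)) := by
    ext m
    simp only [Set.mem_setOf_eq, Set.mem_Iic, BA]
    rw [optIter_fA n hn i m x]
    split_ifs with h <;> simp [h]
  rw [show (BA n).phi i x = sSup {m | OptIter ((BA n).f i) m x ≠ none} from rfl, hset, csSup_Iic]

lemma eps_BA (n : ℕ) (hn : 1 ≤ n) (i : Fin (n+1)) (x : Fin (n+1) → ℕ) :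
    (BA n).eps i x = x i := by
  have hset : {m | OptIter ((BA n).e i) m x ≠ none} = Set.Iic (x i) := by
    ext m
    simp only [Set.mem_setOf_eq, Set.mem_Iic, BA]
    rw [optIter_eA n hn i m x]
    split_ifs with h <;> simp [h]
  rw [show (BA n).eps i x = sSup {m | OptIter ((BA n).e i) m x ≠ none} from rfl, hset, csSup_Iic]

lemma eMax_BA (n : ℕ) (hn : 1 ≤ n) (i : Fin (n+1)) (x : Fin (n+1) → ℕ) :
    (BA n).eMax i x =
      some (Function.update (Function.update x (i-1) (x (i-1) + x i)) i 0) := by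
  rw [show (BA n).eMax i x = OptIter ((BA n).e i) ((BA n).eps i x) x from rfl, eps_BA n hn i x]
  show OptIter (eA n i) (x i) x = _
  rw [optIter_eA n hn i (x i) x, if_pos le_rfl]
  simp

lemma negIdx_val (n k : ℕ) (h1 : 1 ≤ k) (h2 : k ≤ n) :
    (negIdx n (k : ℤ)).val = n + 1 - k := by
  have key : (-(k:ℤ)) % ((n:ℤ)+1) = (n:ℤ)+1-k := by
    rw [show (-(k:ℤ)) = ((n:ℤ)+1-k) + ((n:ℤ)+1) * (-1) by ring,
      Int.add_mul_emod_self_left, Int.emod_eq_of_lt (by omega) (by omega)]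
  simp only [negIdx, key]
  omega

lemma chainOpt_succ {α : Type} (g : ℕ → α → Option α) (m : ℕ) (a : α) :
    ChainOpt g (m+1) a = (ChainOpt g m a).bind (g (m+1)) := by
  simp [ChainOpt, List.range_succ]

lemma chain_lemma (n : ℕ) (hn : 1 ≤ n) (b : Fin (n+1) → ℕ) (m : ℕ) (hm : m + 1 ≤ n) :
    ∃ c, ChainOpt (fun j => (BA n).eMax (negIdx n j)) m b = some c ∧
      ∀ j : Fin (n+1), j.val < n - m → c j = b j := by
  induction m with
  | zero => exact ⟨b, by simp [ChainOpt], fun j _ => rfl⟩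
  | succ m ih =>
    obtain ⟨c, hc, hcj⟩ := ih (by omega)
    set i : Fin (n+1) := negIdx n ((m:ℤ)+1) with hi
    have hival : i.val = n - m := by
      have := negIdx_val n (m+1) (by omega) (by omega)
      push_cast at this ⊢
      simp only [hi]
      omega
    have hi1val : (i - 1).val = n - m - 1 := by
      rw [sub1_val n i hn, hival, if_neg (by omega)]
    refine ⟨Function.update (Function.update c (i-1) (c (i-1) + c i)) i 0, ?_, ?_⟩
    · erw [chainOpt_succ, hc, Option.bind_some]
      show (BA n).eMax (negIdx n ((m:ℤ)+1)) c = _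
      rw [← hi, eMax_BA n hn i c]
      rfl
    · intro j hj
      have hji : j ≠ i := by intro h; rw [h] at hj; omega
      have hji1 : j ≠ i - 1 := by
        intro h
        have : j.val = n - m - 1 := by rw [h, hi1val]
        omega
      erw [Function.update_apply, if_neg hji, Function.update_apply, if_neg hji1]
      exact hcj j (by omega)

end Aux

/-- Lemma 3.1 for type `A_n^{(1)}`: with `i_k ≡ -k (mod n+1)` and
`t_k(b) = φ_{i_k}(ẽ^max_{i_{k-1}} ⋯ ẽ^max_{i_1} b)`, for every `b = (x_1,…,x_{n+1}) ∈ B_l`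
and `1 ≤ k ≤ n` one has `t_k(b) = x_{n+1-k}` (zero-indexed: coordinate `n - k`). -/

theorem stmt9 (n l : ℕ) (hn : 1 ≤ n) (hl : 1 ≤ l) (b : Fin (n + 1) → ℕ)
    (hb : ∑ j, b j = l) (k : ℕ) (hk1 : 1 ≤ k) (hk2 : k ≤ n) :
    ∃ c : Fin (n + 1) → ℕ,
      ChainOpt (fun j => (BA n).eMax (negIdx n j)) (k - 1) b = some c ∧
      (BA n).phi (negIdx n k) c = b ⟨n - k, by omega⟩ :=  by
  obtain ⟨c, hc, hcj⟩ := chain_lemma n hn b (k-1) (by omega)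
  refine ⟨c, hc, ?_⟩
  rw [phi_BA n hn _ c]
  have hval : (negIdx n (k:ℤ)).val = n + 1 - k := negIdx_val n k hk1 hk2
  have h1 : (negIdx n (k:ℤ) - 1).val = n - k := by
    rw [sub1_val n _ hn, hval, if_neg (by omega)]; omega
  rw [hcj _ (by rw [h1]; omega)]
  congr 1
  exact Fin.ext h1
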